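/- Let C_2 = [−1,1]^2 ⊂ ℝ^2 and T = conv{(0,1), (1,−1), (−1,−1)}. Then for all r, s ∈ ℚ_{≥0}, the Minkowski sum rC_2 + sT equals {x ∈ ℝ^2 : −(r+s) ≤ x_1 ≤ r+s, −(r+s) ≤ x_2 ≤ r+s, 2x_1 + x_2 ≤ 3r+s, −2x_1 + x_2 ≤ 3r+s}. -/

import Mathlib

open scoped Pointwise

/-- The square `C₂ = conv{(1,1), (−1,1), (−1,−1), (1,−1)} = [−1,1]²`. -/
def Csquare : Set (ℝ × ℝ) :=
  convexHull ℝ {((1 : ℝ), (1 : ℝ)), (-1, 1), (-1, -1), (1, -1)}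

/-- The triangle `T = conv{(0,1), (1,−1), (−1,−1)}`. -/
def Ttriangle : Set (ℝ × ℝ) :=
  convexHull ℝ {((0 : ℝ), (1 : ℝ)), (1, -1), (-1, -1)}

lemma mem_hull3 (p q r : ℝ × ℝ) (a b c : ℝ) (ha : 0 ≤ a) (hb : 0 ≤ b) (hc : 0 ≤ c)
    (hsum : a + b + c = 1) :
    a • p + b • q + c • r ∈ convexHull ℝ ({p, q, r} : Set (ℝ × ℝ)) := by
  have h := Finset.centerMass_mem_convexHull (Finset.univ : Finset (Fin 3))
    (w := ![a, b, c]) (z := ![p, q, r]) (s := ({p, q, r} : Set (ℝ × ℝ))) (fun i _ => by fin_cases i <;> assumption)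
    (by simp [Fin.sum_univ_three, hsum]) (fun i _ => by fin_cases i <;> simp)
  rwa [Finset.centerMass, Fin.sum_univ_three, Fin.sum_univ_three,
    show (![a,b,c] 0 + ![a,b,c] 1 + ![a,b,c] 2) = 1 by simp [hsum], inv_one, one_smul] at h

lemma mem_hull4 (p q r t : ℝ × ℝ) (a b c d : ℝ) (ha : 0 ≤ a) (hb : 0 ≤ b) (hc : 0 ≤ c)
    (hd : 0 ≤ d) (hsum : a + b + c + d = 1) :
    a • p + b • q + c • r + d • t ∈ convexHull ℝ ({p, q, r, t} : Set (ℝ × ℝ)) := by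
  have h := Finset.centerMass_mem_convexHull (Finset.univ : Finset (Fin 4))
    (w := ![a, b, c, d]) (z := ![p, q, r, t]) (s := ({p, q, r, t} : Set (ℝ × ℝ))) (fun i _ => by fin_cases i <;> assumption)
    (by simp [Fin.sum_univ_four, hsum]) (fun i _ => by fin_cases i <;> simp)
  rwa [Finset.centerMass, Fin.sum_univ_four, Fin.sum_univ_four,
    show (![a,b,c,d] 0 + ![a,b,c,d] 1 + ![a,b,c,d] 2 + ![a,b,c,d] 3) = 1 by simp [hsum],
    inv_one, one_smul] at h

lemma sq_mem (u v : ℝ) (h1 : -1 ≤ u) (h2 : u ≤ 1) (h3 : -1 ≤ v) (h4 : v ≤ 1) :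
    (u, v) ∈ Csquare := by
  have h := mem_hull4 (1, 1) (-1, 1) (-1, -1) (1, -1)
    ((1+u)/2 * ((1+v)/2)) ((1-u)/2 * ((1+v)/2)) ((1-u)/2 * ((1-v)/2)) ((1+u)/2 * ((1-v)/2))
    (by nlinarith) (by nlinarith) (by nlinarith) (by nlinarith) (by ring)
  have e : ((1+u)/2 * ((1+v)/2)) • ((1:ℝ), (1:ℝ)) + ((1-u)/2 * ((1+v)/2)) • ((-1:ℝ), (1:ℝ))
      + ((1-u)/2 * ((1-v)/2)) • ((-1:ℝ), (-1:ℝ)) + ((1+u)/2 * ((1-v)/2)) • ((1:ℝ), (-1:ℝ))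
      = (u, v) := by
    simp only [Prod.smul_mk, smul_eq_mul, Prod.mk_add_mk, Prod.mk.injEq]
    constructor <;> ring
  rw [e] at h
  exact h

lemma tri_mem (u v : ℝ) (h1 : -1 ≤ v) (h2 : 2*u + v ≤ 1) (h3 : -2*u + v ≤ 1) :
    (u, v) ∈ Ttriangle := by
  have h := mem_hull3 (0, 1) (1, -1) (-1, -1)
    ((1+v)/2) ((1 - v + 2*u)/4) ((1 - v - 2*u)/4)
    (by linarith) (by linarith) (by linarith) (by ring)
  have e : ((1+v)/2) • ((0:ℝ), (1:ℝ)) + ((1 - v + 2*u)/4) • ((1:ℝ), (-1:ℝ))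
      + ((1 - v - 2*u)/4) • ((-1:ℝ), (-1:ℝ)) = (u, v) := by
    simp only [Prod.smul_mk, smul_eq_mul, Prod.mk_add_mk, Prod.mk.injEq]
    constructor <;> ring
  rw [e] at h
  exact h

lemma sq_sub : Csquare ⊆ {x : ℝ × ℝ | -1 ≤ x.1 ∧ x.1 ≤ 1 ∧ -1 ≤ x.2 ∧ x.2 ≤ 1} := by
  apply convexHull_min
  · intro x hx
    simp only [Set.mem_insert_iff, Set.mem_singleton_iff] at hx
    rcases hx with rfl | rfl | rfl | rfl <;> norm_num
  · intro x hx y hy a b ha hb hab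
    simp only [Set.mem_setOf_eq] at hx hy ⊢
    obtain ⟨p1, p2, p3, p4⟩ := hx
    obtain ⟨q1, q2, q3, q4⟩ := hy
    simp only [Prod.fst_add, Prod.snd_add, Prod.smul_fst, Prod.smul_snd, smul_eq_mul]
    refine ⟨?_, ?_, ?_, ?_⟩ <;> nlinarith

lemma tri_sub : Ttriangle ⊆ {x : ℝ × ℝ | -1 ≤ x.2 ∧ 2*x.1 + x.2 ≤ 1 ∧ -2*x.1 + x.2 ≤ 1} := by
  apply convexHull_min
  · intro x hx
    simp only [Set.mem_insert_iff, Set.mem_singleton_iff] at hx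
    rcases hx with rfl | rfl | rfl <;> norm_num
  · intro x hx y hy a b ha hb hab
    simp only [Set.mem_setOf_eq] at hx hy ⊢
    obtain ⟨p1, p2, p3⟩ := hx
    obtain ⟨q1, q2, q3⟩ := hy
    simp only [Prod.fst_add, Prod.snd_add, Prod.smul_fst, Prod.smul_snd, smul_eq_mul]
    refine ⟨?_, ?_, ?_⟩ <;> nlinarith

lemma smul_sq_mem (R u v : ℝ) (hR : 0 ≤ R) (h1 : -R ≤ u) (h2 : u ≤ R) (h3 : -R ≤ v)
    (h4 : v ≤ R) : (u, v) ∈ R • Csquare := by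
  rcases hR.eq_or_lt with h | h
  · have hu : u = 0 := le_antisymm (by linarith) (by linarith)
    have hv : v = 0 := le_antisymm (by linarith) (by linarith)
    refine Set.mem_smul_set.2 ⟨(0, 0), sq_mem 0 0 (by norm_num) (by norm_num) (by norm_num) (by norm_num), ?_⟩
    simp [← h, hu, hv, Prod.smul_mk]; rfl
  · refine Set.mem_smul_set.2 ⟨(u / R, v / R),
      sq_mem _ _ ?_ ?_ ?_ ?_, ?_⟩
    · rw [le_div_iff₀ h]; linarith
    · rw [div_le_one h]; linarith
    · rw [le_div_iff₀ h]; linarith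
    · rw [div_le_one h]; linarith
    · simp [Prod.smul_mk, smul_eq_mul, mul_div_cancel₀, h.ne']

lemma smul_tri_mem (S γ β : ℝ) (hS : 0 ≤ S) (h1 : -S ≤ β) (h2 : 2*γ + β ≤ S)
    (h3 : -2*γ + β ≤ S) : (γ, β) ∈ S • Ttriangle := by
  rcases hS.eq_or_lt with h | h
  · have hβ : β = 0 := le_antisymm (by linarith) (by linarith)
    have hγ : γ = 0 := le_antisymm (by linarith) (by linarith)
    refine Set.mem_smul_set.2 ⟨(0, 0), tri_mem 0 0 (by norm_num) (by norm_num) (by norm_num), ?_⟩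
    simp [← h, hβ, hγ, Prod.smul_mk]; rfl
  · refine Set.mem_smul_set.2 ⟨(γ / S, β / S), tri_mem _ _ ?_ ?_ ?_, ?_⟩
    · rw [le_div_iff₀ h]; linarith
    · have e : 2*(γ/S) + β/S = (2*γ + β)/S := by ring
      rw [e, div_le_one h]; exact h2
    · have e : -2*(γ/S) + β/S = (-2*γ + β)/S := by ring
      rw [e, div_le_one h]; exact h3
    · simp [Prod.smul_mk, smul_eq_mul, mul_div_cancel₀, h.ne']

lemma clamp_facts (w x R : ℝ) (hw : 0 ≤ w) (hR : 0 ≤ R) (hu : x ≤ R + w)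
    (hl : -(R + w) ≤ x) :
    x - max (-w) (min w x) ≤ R ∧ -R ≤ x - max (-w) (min w x) := by
  rcases le_total x (-w) with h | h
  · rw [min_eq_right (by linarith), max_eq_left (by linarith)]
    constructor <;> linarith
  · rcases le_total x w with h' | h'
    · rw [min_eq_right h', max_eq_right h]
      constructor <;> linarith
    · rw [min_eq_left h', max_eq_right (by linarith)]
      constructor <;> linarith

theorem stmt9_real (r s : ℝ) (hr : 0 ≤ r) (hs : 0 ≤ s) :
    r • Csquare + s • Ttriangle =
      {x : ℝ × ℝ |
        -(r + s) ≤ x.1 ∧ x.1 ≤ r + s ∧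
        -(r + s) ≤ x.2 ∧ x.2 ≤ r + s ∧
        2 * x.1 + x.2 ≤ 3 * r + s ∧
        -2 * x.1 + x.2 ≤ 3 * r + s} := by
  ext x
  constructor
  · intro hx
    rw [Set.mem_add] at hx
    obtain ⟨p, hp, q, hq, hpq⟩ := hx
    obtain ⟨a, ha, rfl⟩ := Set.mem_smul_set.1 hp
    obtain ⟨b, hb, rfl⟩ := Set.mem_smul_set.1 hq
    obtain ⟨a1, a2, a3, a4⟩ := sq_sub ha
    obtain ⟨b1, b2, b3⟩ := tri_sub hb
    subst hpq
    simp only [Set.mem_setOf_eq, Prod.fst_add, Prod.snd_add, Prod.smul_fst, Prod.smul_snd,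
      smul_eq_mul]
    refine ⟨?_, ?_, ?_, ?_, ?_, ?_⟩ <;>
      nlinarith [mul_nonneg hr (by linarith : (0:ℝ) ≤ 1 - a.1),
        mul_nonneg hr (by linarith : (0:ℝ) ≤ 1 + a.1),
        mul_nonneg hr (by linarith : (0:ℝ) ≤ 1 - a.2),
        mul_nonneg hr (by linarith : (0:ℝ) ≤ 1 + a.2),
        mul_nonneg hs (by linarith : (0:ℝ) ≤ 1 + b.2),
        mul_nonneg hs (by linarith : (0:ℝ) ≤ 1 - 2*b.1 - b.2),
        mul_nonneg hs (by linarith : (0:ℝ) ≤ 1 + 2*b.1 - b.2)]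
  · intro hx
    simp only [Set.mem_setOf_eq] at hx
    obtain ⟨h1, h2, h3, h4, h5, h6⟩ := hx
    set β := max (-s) (x.2 - r) with hβdef
    have hβ1 : -s ≤ β := le_max_left _ _
    have hβ2 : x.2 - r ≤ β := le_max_right _ _
    have hβ3 : β ≤ x.2 + r := max_le (by linarith) (by linarith)
    have hβ4 : β ≤ s := max_le (by linarith) (by linarith)
    set w := (s - β) / 2 with hwdef
    have hw : 0 ≤ w := by rw [hwdef]; linarith
    have hx1u : x.1 ≤ r + w := by
      rcases max_choice (-s) (x.2 - r) with h | h <;> rw [← hβdef] at h <;>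
        rw [hwdef, h] <;> linarith
    have hx1l : -(r + w) ≤ x.1 := by
      rcases max_choice (-s) (x.2 - r) with h | h <;> rw [← hβdef] at h <;>
        rw [hwdef, h] <;> linarith
    set γ := max (-w) (min w x.1) with hγdef
    have hγ1 : -w ≤ γ := le_max_left _ _
    have hγ2 : γ ≤ w := max_le (by linarith) (min_le_left _ _)
    obtain ⟨hc1, hc2⟩ := clamp_facts w x.1 r hw hr hx1u hx1l
    rw [← hγdef] at hc1 hc2
    rw [Set.mem_add]
    refine ⟨(x.1 - γ, x.2 - β),
      smul_sq_mem r _ _ hr (by linarith) hc1 (by linarith) (by linarith),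
      (γ, β),
      smul_tri_mem s γ β hs hβ1 (by rw [hwdef] at hγ2; linarith)
        (by rw [hwdef] at hγ1; linarith), ?_⟩
    simp [Prod.mk_add_mk]

theorem stmt9 (r s : ℚ) (hr : 0 ≤ r) (hs : 0 ≤ s) :
    (r : ℝ) • Csquare + (s : ℝ) • Ttriangle =
      {x : ℝ × ℝ |
        -((r : ℝ) + s) ≤ x.1 ∧ x.1 ≤ (r : ℝ) + s ∧
        -((r : ℝ) + s) ≤ x.2 ∧ x.2 ≤ (r : ℝ) + s ∧
        2 * x.1 + x.2 ≤ 3 * (r : ℝ) + s ∧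
        -2 * x.1 + x.2 ≤ 3 * (r : ℝ) + s} := by
  exact stmt9_real (r : ℝ) (s : ℝ) (by exact_mod_cast hr) (by exact_mod_cast hs)
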